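/- In the cyclotomic field K = ℚ(ζ_{2^n}) with n ≥ 2, for any z = Σ_{i=0}^{2^{n-1}-1} z_i ζ_{2^n}^i with z_i ∈ ℚ, we have Tr_{K/ℚ}(z·z̄) = 2^{n-1} · Σ_{i=0}^{2^{n-1}-1} z_i². -/

import Mathlib

noncomputable section

/-- Total positivity: all complex embeddings take positive real values. -/
def totPos (K : Type*) [Field K] [NumberField K] (a : K) : Prop :=
  ∀ φ : K →+* ℂ, 0 < (φ a).re ∧ (φ a).im = 0

/-- The real value `Tr_{K/ℚ}(a·x·x̄) = ∑_φ φ(a)·|φ(x)|²` of the unary trace form at `x`. -/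
def qform (K : Type*) [Field K] [NumberField K] (a x : K) : ℝ :=
  ∑ φ : K →+* ℂ, (φ a).re * Complex.normSq (φ x)

/-- `μ(a)`: the infimum of the trace form over nonzero algebraic integers. -/
def muK (K : Type*) [Field K] [NumberField K] (a : K) : ℝ :=
  sInf { t | ∃ x : NumberField.RingOfIntegers K, x ≠ 0 ∧ t = qform K a (x : K) }

/-- `μ*(a)`: the infimum of the trace form over units. -/
def muStarK (K : Type*) [Field K] [NumberField K] (a : K) : ℝ :=
  sInf { t | ∃ u : (NumberField.RingOfIntegers K)ˣ,
    t = qform K a ((u : NumberField.RingOfIntegers K) : K) }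

/-- A number field is unit reducible if `μ(a) = μ*(a)` for all totally positive `a`. -/
def UnitReducible (K : Type*) [Field K] [NumberField K] : Prop :=
  ∀ a : K, totPos K a → muK K a = muStarK K a

/-- The reduction discrepancy `δ_K = sup_a μ*(a)/μ(a)`. -/
def deltaK (K : Type*) [Field K] [NumberField K] : ℝ :=
  sSup { t | ∃ a : K, totPos K a ∧ t = muStarK K a / muK K a }

open Polynomial
lemma trace_pow_eq_zero (nn : ℕ) (hn : 2 ≤ nn) (K : Type) [Field K] [Algebra ℚ K]
    [IsCyclotomicExtension {(2 : ℕ) ^ nn} ℚ K]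
    (ξ : K) (hξ : IsPrimitiveRoot ξ (2 ^ nn)) (k : ℕ) (hk0 : 0 < k)
    (hkd : k < 2 ^ (nn - 1)) : Algebra.trace ℚ K (ξ ^ k) = 0 := by
  have hcast : ((2 : ℕ) ^ nn) = 2 ^ nn := rfl
  have hξ' : IsPrimitiveRoot ξ ((2 : ℕ) ^ nn) := by rw [hcast]; exact hξ
  have hirr : Irreducible (cyclotomic ((2 : ℕ) ^ nn) ℚ) :=
    cyclotomic.irreducible_rat (by positivity)
  set B := hξ'.powerBasis ℚ with hB
  have hdim : B.dim = 2 ^ (nn - 1) := by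
    rw [hB, IsPrimitiveRoot.powerBasis_dim,
      ← hξ'.minpoly_eq_cyclotomic_of_irreducible hirr, natDegree_cyclotomic, hcast,
      Nat.totient_prime_pow Nat.prime_two (by omega)]
    simp
  have hneg : ξ ^ (2 ^ (nn - 1)) = -1 := by
    have h2 : (2 : ℕ) ^ nn = 2 ^ (nn - 1) * 2 := by
      rw [← pow_succ]; congr 1; omega
    exact (hξ.pow (by positivity) h2).eq_neg_one_of_two_right
  rw [Algebra.trace_eq_matrix_trace B.basis, Matrix.trace]
  refine Finset.sum_eq_zero fun i _ => ?_
  rw [Matrix.diag_apply, Algebra.leftMulMatrix_eq_repr_mul]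
  have hbi : ∀ j : Fin B.dim, B.basis j = ξ ^ (j : ℕ) := fun j => by
    rw [PowerBasis.basis_eq_pow]
    congr 1
  rw [hbi i, ← pow_add]
  by_cases hlt : k + (i : ℕ) < 2 ^ (nn - 1)
  · have : ξ ^ (k + (i : ℕ)) = B.basis ⟨k + i, by omega⟩ := by rw [hbi]
    rw [this, B.basis.repr_self, Finsupp.single_apply]
    rw [if_neg]
    intro h
    have := congrArg (Fin.val) h
    simp at this
    omega
  · have hi : (i : ℕ) < 2 ^ (nn - 1) := hdim ▸ i.2
    have hsplit : k + (i : ℕ) = 2 ^ (nn - 1) + (k + i - 2 ^ (nn - 1)) := by omega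
    have hlt2 : k + (i : ℕ) - 2 ^ (nn - 1) < 2 ^ (nn - 1) := by omega
    rw [hsplit, pow_add, hneg, neg_one_mul]
    have : ξ ^ (k + (i : ℕ) - 2 ^ (nn - 1)) =
        B.basis ⟨k + (i : ℕ) - 2 ^ (nn - 1), by omega⟩ := by rw [hbi]
    rw [this, map_neg, B.basis.repr_self, Finsupp.neg_apply, Finsupp.single_apply]
    rw [if_neg, neg_zero]
    intro h
    have := congrArg (Fin.val) h
    simp at this
    omega

theorem stmt3 (nn : ℕ) (hn : 2 ≤ nn) (K : Type) [Field K] [Algebra ℚ K]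
    [IsCyclotomicExtension {(2 : ℕ) ^ nn} ℚ K]
    (ζ : K) (hζ : IsPrimitiveRoot ζ (2 ^ nn))
    (z : Fin (2 ^ (nn - 1)) → ℚ) :
    Algebra.trace ℚ K
        ((∑ i : Fin (2 ^ (nn - 1)), algebraMap ℚ K (z i) * ζ ^ (i : ℕ)) *
         (∑ i : Fin (2 ^ (nn - 1)), algebraMap ℚ K (z i) * ζ⁻¹ ^ (i : ℕ))) =
      2 ^ (nn - 1) * ∑ i : Fin (2 ^ (nn - 1)), (z i) ^ 2 := by
  have hζne : ζ ≠ 0 := hζ.ne_zero (by positivity)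
  have hcast : ((2 : ℕ) ^ nn) = 2 ^ nn := rfl
  have hirr : Irreducible (cyclotomic ((2 : ℕ) ^ nn) ℚ) :=
    cyclotomic.irreducible_rat (by positivity)
  have hfinrank : Module.finrank ℚ K = 2 ^ (nn - 1) := by
    rw [IsCyclotomicExtension.finrank K hirr, hcast,
      Nat.totient_prime_pow Nat.prime_two (by omega)]
    simp
  have key : ∀ i j : Fin (2 ^ (nn - 1)),
      Algebra.trace ℚ K (ζ ^ (i : ℕ) * ζ⁻¹ ^ (j : ℕ)) =
        if i = j then (2 ^ (nn - 1) : ℚ) else 0 := by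
    intro i j
    rcases lt_trichotomy (i : ℕ) (j : ℕ) with h | h | h
    · rw [if_neg (by intro he; rw [he] at h; omega)]
      have heq : ζ ^ (i : ℕ) * ζ⁻¹ ^ (j : ℕ) = ζ⁻¹ ^ ((j : ℕ) - (i : ℕ)) := by
        have hj : (j : ℕ) = ((j : ℕ) - (i : ℕ)) + (i : ℕ) := by omega
        rw [inv_pow, inv_pow, pow_sub₀ ζ hζne h.le, mul_inv, inv_inv, mul_comm]
      rw [heq]
      exact trace_pow_eq_zero nn hn K ζ⁻¹ hζ.inv _ (by omega) (by omega)
    · have he : i = j := Fin.ext h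
      rw [if_pos he, he, inv_pow, mul_inv_cancel₀ (pow_ne_zero _ hζne),
        ← map_one (algebraMap ℚ K), Algebra.trace_algebraMap, hfinrank]
      ring
    · rw [if_neg (by intro he; rw [he] at h; omega)]
      have heq : ζ ^ (i : ℕ) * ζ⁻¹ ^ (j : ℕ) = ζ ^ ((i : ℕ) - (j : ℕ)) := by
        have hi : (i : ℕ) = ((i : ℕ) - (j : ℕ)) + (j : ℕ) := by omega
        rw [inv_pow, pow_sub₀ ζ hζne h.le]
      rw [heq]
      exact trace_pow_eq_zero nn hn K ζ hζ _ (by omega) (by omega)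
  rw [Finset.sum_mul_sum, map_sum]
  have expand : ∀ i j : Fin (2 ^ (nn - 1)),
      Algebra.trace ℚ K ((algebraMap ℚ K (z i) * ζ ^ (i : ℕ)) *
        (algebraMap ℚ K (z j) * ζ⁻¹ ^ (j : ℕ))) =
      z i * z j * (if i = j then (2 ^ (nn - 1) : ℚ) else 0) := by
    intro i j
    have hs : (algebraMap ℚ K (z i) * ζ ^ (i : ℕ)) * (algebraMap ℚ K (z j) * ζ⁻¹ ^ (j : ℕ)) =
        (z i * z j) • (ζ ^ (i : ℕ) * ζ⁻¹ ^ (j : ℕ)) := by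
      rw [Algebra.smul_def, map_mul]
      ring
    rw [hs, LinearMap.map_smul, smul_eq_mul, key i j]
  simp only [map_sum, expand]
  simp only [mul_ite, mul_zero, Finset.sum_ite_eq, Finset.mem_univ, if_true]
  rw [Finset.mul_sum]
  refine Finset.sum_congr rfl fun i _ => by ring
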